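/- Let m be a positive integer, n = 2m, q = 3^n, and let δ ∈ F_q satisfy Tr_m^{2m}(δ) = 0. Define F : F_q → F_q by F(x) = (x^{3^m} − x + δ)^{3^{2m−1} + 2·3^{m−1}} + x. Then for every c ∈ F_q not in the subfield F_{3^m} (i.e., c^{3^m} ≠ c), F is PcN: for all a, b ∈ F_q, the equation F(x+a) − c·F(x) = b has exactly one solution x ∈ F_q. -/

import Mathlib

theorem stmt_15 (m : ℕ) (hm : 0 < m) (F : Type*) [Field F] [Fintype F]
    (hF : Fintype.card F = 3 ^ (2 * m)) (δ c : F)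
    (hδ : δ + δ ^ (3 ^ m) = 0)
    (hc : c ^ (3 ^ m) ≠ c)
    (G : F → F)
    (hG : ∀ x, G x = (x ^ (3 ^ m) - x + δ) ^ (3 ^ (2 * m - 1) + 2 * 3 ^ (m - 1)) + x) :
    ∀ a b : F, ∃! x : F, G (x + a) - c * G x = b := by
  have hp3 : Fact (Nat.Prime 3) := ⟨by norm_num⟩
  have h30 : (3 : F) = 0 := by
    have hcard : ((Fintype.card F : ℕ) : F) = 0 := Nat.cast_card_eq_zero F
    rw [hF] at hcard
    push_cast at hcard
    exact pow_eq_zero_iff (by positivity) |>.mp hcard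
  have hchar : CharP F 3 := (CharP.charP_iff_prime_eq_zero hp3.1).2 h30
  -- Frobenius-type facts
  have haddpow : ∀ x y : F, (x + y) ^ (3 ^ m) = x ^ (3 ^ m) + y ^ (3 ^ m) := fun x y =>
    add_pow_char_pow ..
  have hsubpow : ∀ x y : F, (x - y) ^ (3 ^ m) = x ^ (3 ^ m) - y ^ (3 ^ m) := fun x y =>
    sub_pow_char_pow ..
  have hq : ∀ x : F, x ^ (3 ^ (2 * m)) = x := by
    intro x
    have := FiniteField.pow_card x
    rwa [hF] at this
  have hδ' : δ ^ (3 ^ m) = -δ := by linear_combination hδ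
  -- the key simplification : y ^ d = y whenever y ^ (3^m) = -y
  have hkey : ∀ y : F, y ^ (3 ^ m) = -y →
      y ^ (3 ^ (2 * m - 1) + 2 * 3 ^ (m - 1)) = y := by
    intro y hy
    have h3d : 3 * (3 ^ (2 * m - 1) + 2 * 3 ^ (m - 1)) = 3 ^ (2 * m) + 2 * 3 ^ m := by
      have e1 : 2 * m - 1 + 1 = 2 * m := by omega
      have e2 : m - 1 + 1 = m := by omega
      calc 3 * (3 ^ (2 * m - 1) + 2 * 3 ^ (m - 1))
          = 3 ^ (2 * m - 1 + 1) + 2 * 3 ^ (m - 1 + 1) := by ring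
        _ = 3 ^ (2 * m) + 2 * 3 ^ m := by rw [e1, e2]
    have hcube : (y ^ (3 ^ (2 * m - 1) + 2 * 3 ^ (m - 1))) ^ 3 = y ^ 3 := by
      rw [← pow_mul, Nat.mul_comm, h3d, pow_add, hq, Nat.mul_comm 2 (3 ^ m), pow_mul, hy]
      ring
    have hinj : Function.Injective fun z : F => z ^ 3 := by
      intro u v huv
      simp only at huv
      have : (u - v) ^ 3 = 0 := by
        rw [(sub_pow_char .. : (u - v) ^ 3 = u ^ 3 - v ^ 3), huv]; ring
      have := pow_eq_zero_iff (n := 3) (by norm_num) |>.mp this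
      exact sub_eq_zero.mp this
    exact hinj hcube
  -- G simplifies
  have hG' : ∀ x : F, G x = x ^ (3 ^ m) + δ := by
    intro x
    rw [hG]
    have hy : (x ^ (3 ^ m) - x + δ) ^ (3 ^ m) = -(x ^ (3 ^ m) - x + δ) := by
      rw [haddpow, hsubpow, hδ', ← pow_mul, ← pow_add]
      have : m + m = 2 * m := by omega
      rw [this, hq]
      ring
    rw [hkey _ hy]
    ring
  have hc1 : (1 : F) - c ≠ 0 := by
    intro h
    have hc' : c = 1 := by linear_combination -h
    apply hc
    rw [hc', one_pow]
  intro a b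
  set t : F := (b - a ^ (3 ^ m) - δ + c * δ) / (1 - c) with ht
  have hfinj : Function.Injective fun x : F => x ^ (3 ^ m) := by
    intro u v huv
    simp only at huv
    have : (u - v) ^ (3 ^ m) = 0 := by rw [hsubpow, huv]; ring
    have := pow_eq_zero_iff (n := 3 ^ m) (by positivity) |>.mp this
    exact sub_eq_zero.mp this
  obtain ⟨x0, hx0⟩ := (Finite.injective_iff_surjective.mp hfinj) t
  simp only at hx0
  have hteq : (1 - c) * t = b - a ^ (3 ^ m) - δ + c * δ := by
    rw [ht, mul_div_assoc', mul_div_right_comm, div_self hc1, one_mul]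
  refine ⟨x0, ?_, ?_⟩
  · show G (x0 + a) - c * G x0 = b
    rw [hG', hG', haddpow, hx0]
    linear_combination hteq
  · intro y hy
    have hy' : G (y + a) - c * G y = b := hy
    apply hfinj
    simp only
    rw [hG', hG', haddpow] at hy'
    rw [hx0]
    have : (1 - c) * y ^ (3 ^ m) = (1 - c) * t := by
      rw [hteq]; linear_combination hy'
    exact mul_left_cancel₀ hc1 this
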